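/- The moment problem for the normalized arcsine law is determinate: if μ is a probability measure on ℝ such that for every natural number n, ∫ x^n dμ(x) = M_n where M_{2m+1} = 0 and M_{2m} = (1/2^m)·(2m choose m), then μ equals the normalized arcsine law μ_As. -/

import Mathlib

open MeasureTheory
open Real Set intervalIntegral
open scoped NNReal ENNReal


lemma prod_aux (m : ℕ) : ∏ i ∈ Finset.range m, ((2 * (i:ℝ) + 1) / (2 * i + 2))
    = (Nat.choose (2 * m) m : ℝ) / 4 ^ m := by
  induction m with
  | zero => simp
  | succ k ih =>
      have key : ((k:ℝ) + 1) * (Nat.choose (2 * (k+1)) (k+1) : ℝ)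
          = 2 * (2 * k + 1) * (Nat.choose (2 * k) k : ℝ) := by
        have := Nat.succ_mul_centralBinom_succ k
        simp only [Nat.centralBinom] at this
        exact_mod_cast this
      rw [Finset.prod_range_succ, ih]
      have h1 : ((k:ℝ) + 1) ≠ 0 := by positivity
      have h4 : (4:ℝ) ^ k ≠ 0 := by positivity
      field_simp
      linear_combination (-(2:ℝ) * 4^k) * key

lemma neg_half_int (n : ℕ) :
    ∫ t in (-(π/2))..(0:ℝ), sin t ^ n = (-1:ℝ)^n * ∫ t in (0:ℝ)..(π/2), sin t ^ n := by
  have h := intervalIntegral.integral_comp_neg (fun x => Real.sin x ^ n) (a := 0) (b := π/2)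
  simp only [neg_zero] at h
  rw [← h]
  rw [← intervalIntegral.integral_const_mul]
  congr 1 with x
  rw [Real.sin_neg, neg_pow]

lemma upper_half_int (n : ℕ) :
    ∫ t in (π/2)..π, sin t ^ n = ∫ t in (0:ℝ)..(π/2), sin t ^ n := by
  have h := intervalIntegral.integral_comp_sub_left (fun x => Real.sin x ^ n) π (a := 0) (b := π/2)
  simp only [Real.sin_pi_sub, sub_zero, sub_self] at h
  have hpi : π - π/2 = π/2 := by ring
  rw [hpi] at h
  exact h.symm

lemma sym_int (n : ℕ) :
    ∫ t in (-(π/2))..(π/2), sin t ^ n = (1 + (-1:ℝ)^n) / 2 * ∫ t in (0:ℝ)..π, sin t ^ n := by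
  have hint : ∀ a b : ℝ, IntervalIntegrable (fun t => Real.sin t ^ n) volume a b :=
    fun a b => (Real.continuous_sin.pow n).intervalIntegrable a b
  have h1 : ∫ t in (-(π/2))..(π/2), sin t ^ n
      = (∫ t in (-(π/2))..(0:ℝ), sin t ^ n) + ∫ t in (0:ℝ)..(π/2), sin t ^ n :=
    (intervalIntegral.integral_add_adjacent_intervals (hint _ _) (hint _ _)).symm
  have h2 : ∫ t in (0:ℝ)..π, sin t ^ n
      = (∫ t in (0:ℝ)..(π/2), sin t ^ n) + ∫ t in (π/2)..π, sin t ^ n :=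
    (intervalIntegral.integral_add_adjacent_intervals (hint _ _) (hint _ _)).symm
  rw [h1, h2, neg_half_int, upper_half_int]
  ring

lemma sin_even_int (m : ℕ) :
    ∫ t in (-(π/2))..(π/2), sin t ^ (2 * m) = π * ((Nat.choose (2*m) m : ℝ) / 4 ^ m) := by
  rw [sym_int]
  have : ((-1:ℝ)) ^ (2*m) = 1 := by rw [pow_mul]; norm_num
  rw [this, integral_sin_pow_even, prod_aux]
  norm_num

lemma sin_odd_int (m : ℕ) :
    ∫ t in (-(π/2))..(π/2), sin t ^ (2 * m + 1) = 0 := by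
  rw [sym_int]
  have : ((-1:ℝ)) ^ (2*m+1) = -1 := by rw [pow_succ, pow_mul]; norm_num
  rw [this]; norm_num


lemma sqrt2_pos : (0:ℝ) < Real.sqrt 2 := Real.sqrt_pos.mpr (by norm_num)

lemma image_sin : (fun θ : ℝ => Real.sqrt 2 * Real.sin θ) '' Ioo (-(π/2)) (π/2)
    = Ioo (-Real.sqrt 2) (Real.sqrt 2) := by
  ext x
  constructor
  · rintro ⟨θ, hθ, rfl⟩
    have h1 : Real.sin θ < 1 := by
      have := Real.strictMonoOn_sin ⟨le_of_lt hθ.1, le_of_lt hθ.2⟩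
        (Set.mem_Icc.mpr ⟨by linarith [pi_pos], le_refl _⟩) hθ.2
      simpa using this
    have h2 : -1 < Real.sin θ := by
      have := Real.strictMonoOn_sin (Set.mem_Icc.mpr ⟨le_refl _, by linarith [pi_pos]⟩)
        ⟨le_of_lt hθ.1, le_of_lt hθ.2⟩ hθ.1
      simpa using this
    simp only
    constructor
    · nlinarith [sqrt2_pos]
    · nlinarith [sqrt2_pos]
  · rintro ⟨h1, h2⟩
    refine ⟨Real.arcsin (x / Real.sqrt 2), ⟨?_, ?_⟩, ?_⟩
    · exact Real.neg_pi_div_two_lt_arcsin.mpr (by rw [neg_lt, ← neg_div]; exact (div_lt_one sqrt2_pos).mpr (by linarith))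
    · exact Real.arcsin_lt_pi_div_two.mpr ((div_lt_one sqrt2_pos).mpr h2)
    · simp only
      rw [Real.sin_arcsin (by rw [neg_le, ← neg_div]; exact (div_le_one sqrt2_pos).mpr (by linarith))
        ((div_le_one sqrt2_pos).mpr (le_of_lt h2))]
      field_simp

lemma hasDeriv_aux : ∀ θ ∈ Ioo (-(π/2)) (π/2), HasDerivWithinAt
    (fun θ : ℝ => Real.sqrt 2 * Real.sin θ) (Real.sqrt 2 * Real.cos θ) (Ioo (-(π/2)) (π/2)) θ :=
  fun θ _ => ((Real.hasDerivAt_sin θ).const_mul (Real.sqrt 2)).hasDerivWithinAt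

lemma injOn_aux : InjOn (fun θ : ℝ => Real.sqrt 2 * Real.sin θ) (Ioo (-(π/2)) (π/2)) :=
  fun _ h1 _ h2 heq => Real.injOn_sin (Ioo_subset_Icc_self h1) (Ioo_subset_Icc_self h2)
    (mul_left_cancel₀ sqrt2_pos.ne' heq)

lemma subst_int (g : ℝ → ℝ) :
    ∫ x in Ioo (-Real.sqrt 2) (Real.sqrt 2), g x
    = ∫ θ in Ioo (-(π/2)) (π/2), |Real.sqrt 2 * Real.cos θ| • g (Real.sqrt 2 * Real.sin θ) := by
  rw [← image_sin]
  exact integral_image_eq_integral_abs_deriv_smul measurableSet_Ioo hasDeriv_aux injOn_aux g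

lemma subst_integrable (g : ℝ → ℝ) :
    IntegrableOn g (Ioo (-Real.sqrt 2) (Real.sqrt 2)) ↔
    IntegrableOn (fun θ => |Real.sqrt 2 * Real.cos θ| • g (Real.sqrt 2 * Real.sin θ))
      (Ioo (-(π/2)) (π/2)) := by
  rw [← image_sin]
  exact integrableOn_image_iff_integrableOn_abs_deriv_smul measurableSet_Ioo hasDeriv_aux injOn_aux g

lemma integrand_simp (n : ℕ) {θ : ℝ} (hθ : θ ∈ Ioo (-(π/2)) (π/2)) :
    |Real.sqrt 2 * Real.cos θ| •
      ((1 / (π * Real.sqrt (2 - (Real.sqrt 2 * Real.sin θ) ^ 2))) * (Real.sqrt 2 * Real.sin θ) ^ n)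
    = (Real.sqrt 2) ^ n * Real.sin θ ^ n / π := by
  have hcos : 0 < Real.cos θ := Real.cos_pos_of_mem_Ioo hθ
  have h2 : 2 - (Real.sqrt 2 * Real.sin θ) ^ 2 = 2 * Real.cos θ ^ 2 := by
    rw [mul_pow, Real.sq_sqrt (by norm_num : (2:ℝ) ≥ 0)]
    nlinarith [Real.sin_sq_add_cos_sq θ]
  rw [h2, Real.sqrt_mul (by norm_num : (0:ℝ) ≤ 2), Real.sqrt_sq hcos.le]
  rw [abs_of_pos (by positivity), smul_eq_mul, mul_pow]
  have hπ := Real.pi_pos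
  field_simp

/-- The normalized arcsine law: the measure on `ℝ` with density
`x ↦ 1/(π·√(2 − x²))` on `(−√2, √2)` with respect to Lebesgue measure. -/
noncomputable def arcsineLaw : Measure ℝ :=
  (volume.restrict (Set.Ioo (-Real.sqrt 2) (Real.sqrt 2))).withDensity
    fun x => ENNReal.ofReal (1 / (Real.pi * Real.sqrt (2 - x ^ 2)))

lemma r_nonneg (x : ℝ) : 0 ≤ 1 / (π * Real.sqrt (2 - x ^ 2)) := by
  have := Real.pi_pos
  positivity

lemma key_int (n : ℕ) :
    ∫ x in Ioo (-Real.sqrt 2) (Real.sqrt 2), (1 / (π * Real.sqrt (2 - x ^ 2))) * x ^ n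
    = (Real.sqrt 2) ^ n / π * ∫ t in (-(π/2))..(π/2), Real.sin t ^ n := by
  rw [subst_int (fun x => (1 / (π * Real.sqrt (2 - x ^ 2))) * x ^ n)]
  rw [setIntegral_congr_fun measurableSet_Ioo
    (g := fun θ => ((Real.sqrt 2) ^ n / π) * Real.sin θ ^ n)
    (fun θ hθ => (integrand_simp n hθ).trans (by ring))]
  rw [MeasureTheory.integral_const_mul]
  rw [intervalIntegral.integral_of_le (by linarith [pi_pos] : -(π/2) ≤ π/2),
    ← integral_Ioc_eq_integral_Ioo]

lemma key_integrable (n : ℕ) :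
    IntegrableOn (fun x => (1 / (π * Real.sqrt (2 - x ^ 2))) * x ^ n)
      (Ioo (-Real.sqrt 2) (Real.sqrt 2)) := by
  rw [subst_integrable]
  apply MeasureTheory.Integrable.congr (f := fun θ => (Real.sqrt 2) ^ n * Real.sin θ ^ n / π)
  · apply (IntegrableOn.mono_set · Ioo_subset_Icc_self)
    apply Continuous.integrableOn_Icc
    have := Real.pi_pos
    continuity
  · filter_upwards [ae_restrict_mem measurableSet_Ioo] with θ hθ
    exact (integrand_simp n hθ).symm

lemma arcsine_moment (n : ℕ) :
    ∫ x, x ^ n ∂arcsineLaw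
    = (Real.sqrt 2) ^ n / π * ∫ t in (-(π/2))..(π/2), Real.sin t ^ n := by
  rw [arcsineLaw]
  have hd : (fun x : ℝ => ENNReal.ofReal (1 / (Real.pi * Real.sqrt (2 - x ^ 2))))
      = fun x => ((Real.toNNReal (1 / (Real.pi * Real.sqrt (2 - x ^ 2))) : ℝ≥0) : ℝ≥0∞) := rfl
  have hm : Measurable fun x : ℝ => Real.toNNReal (1 / (Real.pi * Real.sqrt (2 - x ^ 2))) := by
    apply Measurable.real_toNNReal
    simp_rw [one_div]
    exact (((continuous_const.sub (continuous_pow 2)).sqrt).measurable.const_mul π).inv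
  rw [hd, integral_withDensity_eq_integral_smul₀ hm.aemeasurable]
  have : ∀ x ∈ Ioo (-Real.sqrt 2) (Real.sqrt 2),
      Real.toNNReal (1 / (Real.pi * Real.sqrt (2 - x ^ 2))) • x ^ n
      = (1 / (π * Real.sqrt (2 - x ^ 2))) * x ^ n := by
    intro x _
    rw [NNReal.smul_def, smul_eq_mul, Real.coe_toNNReal _ (r_nonneg x)]
  rw [setIntegral_congr_fun measurableSet_Ioo this, key_int]

lemma arcsine_univ : arcsineLaw Set.univ = 1 := by
  rw [arcsineLaw, withDensity_apply _ MeasurableSet.univ, Measure.restrict_univ]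
  have h0 : ∀ᵐ x ∂(volume.restrict (Ioo (-Real.sqrt 2) (Real.sqrt 2))),
      0 ≤ 1 / (π * Real.sqrt (2 - x ^ 2)) :=
    Filter.Eventually.of_forall fun x => r_nonneg x
  have hInt : Integrable (fun x => 1 / (π * Real.sqrt (2 - x ^ 2)))
      (volume.restrict (Ioo (-Real.sqrt 2) (Real.sqrt 2))) := by
    have := key_integrable 0
    simpa [IntegrableOn] using this
  rw [← MeasureTheory.ofReal_integral_eq_lintegral_ofReal hInt h0]
  have := key_int 0
  simp only [pow_zero, mul_one] at this
  rw [this]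
  simp [intervalIntegral.integral_const]

instance : IsProbabilityMeasure arcsineLaw := ⟨arcsine_univ⟩


lemma choose_le_four_pow (m : ℕ) : ((2*m).choose m : ℝ) ≤ 4 ^ m := by
  have h : (2*m).choose m ≤ 4 ^ m := by
    calc (2*m).choose m ≤ ∑ k ∈ Finset.range (2*m+1), (2*m).choose k :=
          Finset.single_le_sum (fun i _ => Nat.zero_le _) (Finset.mem_range.mpr (by omega))
      _ = 2 ^ (2*m) := Nat.sum_range_choose (2*m)
      _ = 4 ^ m := by rw [pow_mul]; norm_num
  exact_mod_cast h

lemma tail_zero (μ : Measure ℝ) [IsProbabilityMeasure μ]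
    (heven : ∀ m : ℕ, ∫ x, x ^ (2 * m) ∂μ = (Nat.choose (2 * m) m : ℝ) / 2 ^ m) :
    μ (Set.Icc (-Real.sqrt 2) (Real.sqrt 2))ᶜ = 0 := by
  have hpos : ∀ m : ℕ, (0:ℝ) < (Nat.choose (2 * m) m : ℝ) / 2 ^ m := fun m => by
    have := Nat.choose_pos (show m ≤ 2*m by omega)
    positivity
  have hInt : ∀ m : ℕ, Integrable (fun x : ℝ => x ^ (2*m)) μ := by
    intro m
    by_contra h
    have hm := heven m
    rw [integral_undef h] at hm
    exact absurd hm.symm (ne_of_gt (hpos m))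
  have hlin : ∀ m : ℕ, ∫⁻ x, ENNReal.ofReal (x ^ (2*m)) ∂μ
      = ENNReal.ofReal ((Nat.choose (2 * m) m : ℝ) / 2 ^ m) := by
    intro m
    rw [← heven m, ← ofReal_integral_eq_lintegral_ofReal (hInt m)
      (Filter.Eventually.of_forall fun x => even_two_mul m |>.pow_nonneg x)]
  -- single cutoff
  have key : ∀ c : ℝ, Real.sqrt 2 < c → μ {x : ℝ | c ≤ |x|} = 0 := by
    intro c hc
    have hc0 : (0:ℝ) < c := lt_of_le_of_lt (Real.sqrt_nonneg 2) hc
    have hc2 : (2:ℝ) < c ^ 2 := by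
      have := Real.sq_sqrt (by norm_num : (0:ℝ) ≤ 2)
      nlinarith [Real.sqrt_nonneg 2]
    have hbound : ∀ m : ℕ, μ {x : ℝ | c ≤ |x|} ≤ ENNReal.ofReal ((2 / c ^ 2) ^ m) := by
      intro m
      have hmeas : AEMeasurable (fun x : ℝ => ENNReal.ofReal (x ^ (2*m))) μ :=
        (measurable_id.pow_const _).ennreal_ofReal.aemeasurable
      have markov := mul_meas_ge_le_lintegral₀ hmeas (ENNReal.ofReal (c ^ (2*m)))
      have hsub : {x : ℝ | c ≤ |x|} ⊆ {x : ℝ | ENNReal.ofReal (c ^ (2*m)) ≤ ENNReal.ofReal (x ^ (2*m))} := by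
        intro x hx
        simp only [Set.mem_setOf_eq] at hx ⊢
        apply ENNReal.ofReal_le_ofReal
        calc c ^ (2*m) ≤ |x| ^ (2*m) := pow_le_pow_left₀ hc0.le hx _
          _ = |x ^ (2*m)| := pow_abs x (2*m)
          _ = x ^ (2*m) := abs_of_nonneg (even_two_mul m |>.pow_nonneg x)
      have hcpos : (0:ℝ) < c ^ (2*m) := by positivity
      have h1 : μ {x : ℝ | c ≤ |x|} ≤ ENNReal.ofReal ((Nat.choose (2 * m) m : ℝ) / 2 ^ m) / ENNReal.ofReal (c ^ (2*m)) := by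
        rw [← hlin m]
        rw [ENNReal.le_div_iff_mul_le (Or.inl (by simp [hcpos])) (Or.inl ENNReal.ofReal_ne_top)]
        calc μ {x : ℝ | c ≤ |x|} * ENNReal.ofReal (c ^ (2*m))
            ≤ μ {x : ℝ | ENNReal.ofReal (c ^ (2*m)) ≤ ENNReal.ofReal (x ^ (2*m))} * ENNReal.ofReal (c ^ (2*m)) := by
              exact mul_le_mul_left (measure_mono hsub) _
          _ = ENNReal.ofReal (c ^ (2*m)) * μ {x : ℝ | ENNReal.ofReal (c ^ (2*m)) ≤ ENNReal.ofReal (x ^ (2*m))} := mul_comm _ _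
          _ ≤ _ := markov
      refine h1.trans ?_
      rw [← ENNReal.ofReal_div_of_pos hcpos]
      apply ENNReal.ofReal_le_ofReal
      calc (Nat.choose (2 * m) m : ℝ) / 2 ^ m / c ^ (2*m)
          ≤ 4 ^ m / 2 ^ m / c ^ (2*m) := by
            gcongr
            exact choose_le_four_pow m
        _ = (2 / c ^ 2) ^ m := by
            rw [div_pow, pow_mul, show (4:ℝ) = 2*2 by norm_num, mul_pow,
              mul_div_assoc, div_self (by positivity : (2:ℝ)^m ≠ 0), mul_one]
    have htend : Filter.Tendsto (fun m : ℕ => ENNReal.ofReal ((2 / c ^ 2) ^ m))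
        Filter.atTop (nhds 0) := by
      rw [show (0:ℝ≥0∞) = ENNReal.ofReal 0 by simp]
      apply ENNReal.tendsto_ofReal
      apply tendsto_pow_atTop_nhds_zero_of_lt_one
      · positivity
      · rw [div_lt_one (by positivity)]; exact hc2
    exact le_antisymm (le_of_tendsto_of_tendsto' tendsto_const_nhds htend hbound) (zero_le')
  have hcover : (Set.Icc (-Real.sqrt 2) (Real.sqrt 2))ᶜ
      ⊆ ⋃ n : ℕ, {x : ℝ | Real.sqrt 2 + 1/(n+1) ≤ |x|} := by
    intro x hx
    simp only [Set.mem_compl_iff, Set.mem_Icc, not_and_or, not_le] at hx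
    have habs : Real.sqrt 2 < |x| := by
      rcases hx with h | h
      · rw [abs_of_neg (by linarith [Real.sqrt_nonneg 2])]; linarith
      · rw [abs_of_pos (lt_of_le_of_lt (Real.sqrt_nonneg 2) h)]; exact h
    obtain ⟨n, hn⟩ := exists_nat_one_div_lt (show (0:ℝ) < |x| - Real.sqrt 2 by linarith)
    exact Set.mem_iUnion.mpr ⟨n, by simp only [Set.mem_setOf_eq]; push_cast; linarith⟩
  refine le_antisymm (le_trans (measure_mono hcover) ?_) (zero_le')
  rw [measure_iUnion_null_iff.mpr]
  intro n
  apply key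
  have : (0:ℝ) < 1/(n+1) := by positivity
  linarith


abbrev Kset : Set ℝ := Set.Icc (-Real.sqrt 2) (Real.sqrt 2)

lemma hKmeas : MeasurableSet Kset := measurableSet_Icc

instance : CompactSpace Kset := isCompact_iff_compactSpace.mp isCompact_Icc

lemma ae_memK (m : Measure ℝ) (hm : m Ksetᶜ = 0) : ∀ᵐ x ∂m, x ∈ Kset := by
  rw [ae_iff]
  exact hm

lemma int_pow (m : Measure ℝ) [IsProbabilityMeasure m] (hm : m Ksetᶜ = 0) (n : ℕ) :
    Integrable (fun x : ℝ => x ^ n) m := by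
  apply Integrable.mono' (integrable_const ((Real.sqrt 2) ^ n))
    ((measurable_id.pow_const n).aestronglyMeasurable)
  filter_upwards [ae_memK m hm] with x hx
  rw [Real.norm_eq_abs, ← pow_abs]
  have hx' : x ∈ Set.Icc (-Real.sqrt 2) (Real.sqrt 2) := hx
  exact pow_le_pow_left₀ (abs_nonneg x) (abs_le.mpr ⟨hx'.1, hx'.2⟩) n

lemma comap_univ (m : Measure ℝ) : (Measure.comap Subtype.val m : Measure Kset) Set.univ = m Kset := by
  rw [(MeasurableEmbedding.subtype_coe hKmeas).comap_apply, Set.image_univ, Subtype.range_coe]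

lemma comap_prob (m : Measure ℝ) [IsProbabilityMeasure m] (hm : m Ksetᶜ = 0) :
    IsProbabilityMeasure (Measure.comap Subtype.val m : Measure Kset) := by
  constructor
  rw [comap_univ m]
  have h1 := measure_add_measure_compl (μ := m) hKmeas
  rw [hm, add_zero] at h1
  rw [h1]; exact measure_univ

noncomputable def Phi (m : Measure ℝ) : C(Kset, ℝ) → ℝ :=
  fun f => ∫ x, f x ∂(Measure.comap Subtype.val m : Measure Kset)

lemma Phi_cont (m : Measure ℝ) [IsProbabilityMeasure m] (hm : m Ksetᶜ = 0) :
    Continuous (Phi m) := by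
  have : LipschitzWith 1 (Phi m) := by
    intro f g
    rw [edist_dist, edist_dist, ENNReal.coe_one, one_mul]
    apply ENNReal.ofReal_le_ofReal
    rw [Real.dist_eq, Phi, Phi]
    set μ' := (Measure.comap Subtype.val m : Measure Kset)
    haveI : IsProbabilityMeasure μ' := comap_prob m hm
    have hif : Integrable (fun x : Kset => f x) μ' := by
      have := BoundedContinuousFunction.integrable μ' (BoundedContinuousFunction.mkOfCompact f)
      exact this
    have hig : Integrable (fun x : Kset => g x) μ' := by
      have := BoundedContinuousFunction.integrable μ' (BoundedContinuousFunction.mkOfCompact g)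
      exact this
    rw [← integral_sub hif hig, ← Real.norm_eq_abs]
    calc ‖∫ x, (f x - g x) ∂μ'‖ ≤ dist f g * (μ' Set.univ).toReal := by
          apply MeasureTheory.norm_integral_le_of_norm_le_const
          filter_upwards with x
          rw [Real.norm_eq_abs, ← Real.dist_eq]
          exact ContinuousMap.dist_apply_le_dist x
      _ = dist f g := by simp
  exact this.continuous

lemma Phi_poly (m : Measure ℝ) [IsProbabilityMeasure m] (hm : m Ksetᶜ = 0) (p : Polynomial ℝ) :
    Phi m (p.toContinuousMapOn Kset) = ∫ x, p.eval x ∂m := by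
  rw [Phi]
  have h2 := integral_subtype_comap (μ := m) hKmeas (fun x => p.eval x)
  refine h2.trans ?_
  rw [Measure.restrict_eq_self_of_ae_mem (ae_memK m hm)]

lemma Phi_eq (μ ν : Measure ℝ) [IsProbabilityMeasure μ] [IsProbabilityMeasure ν]
    (hμ : μ Ksetᶜ = 0) (hν : ν Ksetᶜ = 0)
    (hmom : ∀ n : ℕ, ∫ x, x ^ n ∂μ = ∫ x, x ^ n ∂ν) (f : C(Kset, ℝ)) :
    Phi μ f = Phi ν f := by
  have hpoly : ∀ p : Polynomial ℝ, ∫ x, p.eval x ∂μ = ∫ x, p.eval x ∂ν := by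
    intro p
    have hev : ∀ x : ℝ, p.eval x = ∑ i ∈ Finset.range (p.natDegree + 1), p.coeff i * x ^ i :=
      fun x => p.eval_eq_sum_range x
    simp_rw [hev]
    rw [integral_finset_sum _ (fun i _ => (int_pow μ hμ i).const_mul _),
      integral_finset_sum _ (fun i _ => (int_pow ν hν i).const_mul _)]
    refine Finset.sum_congr rfl fun i _ => ?_
    rw [MeasureTheory.integral_const_mul, MeasureTheory.integral_const_mul, hmom i]
  have hsub : (polynomialFunctions Kset : Set C(Kset, ℝ)) ⊆ {f | Phi μ f = Phi ν f} := by
    rw [polynomialFunctions_coe]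
    rintro f ⟨p, rfl⟩
    simp only [Set.mem_setOf_eq, Polynomial.toContinuousMapOnAlgHom_apply]
    rw [Phi_poly μ hμ p, Phi_poly ν hν p]
    exact hpoly p
  have hclosed : IsClosed {f : C(Kset, ℝ) | Phi μ f = Phi ν f} :=
    isClosed_eq (Phi_cont μ hμ) (Phi_cont ν hν)
  have hdense := polynomialFunctions.topologicalClosure Kset
  have hf : f ∈ closure (polynomialFunctions Kset : Set C(Kset, ℝ)) := by
    have hft : f ∈ (polynomialFunctions Kset).topologicalClosure := by rw [hdense]; trivial
    exact hft
  exact closure_minimal hsub hclosed hf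

lemma measures_eq (μ ν : Measure ℝ) [IsProbabilityMeasure μ] [IsProbabilityMeasure ν]
    (hμ : μ Ksetᶜ = 0) (hν : ν Ksetᶜ = 0)
    (hmom : ∀ n : ℕ, ∫ x, x ^ n ∂μ = ∫ x, x ^ n ∂ν) : μ = ν := by
  apply ext_of_forall_lintegral_eq_of_IsFiniteMeasure
  intro f
  have key : ∫ x, (f x : ℝ) ∂μ = ∫ x, (f x : ℝ) ∂ν := by
    set F : C(Kset, ℝ) := ⟨fun x => (f (x : ℝ) : ℝ),
      (NNReal.continuous_coe.comp f.continuous).comp continuous_subtype_val⟩ with hF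
    have h1 : ∀ (m : Measure ℝ) [IsProbabilityMeasure m], m Ksetᶜ = 0 →
        Phi m F = ∫ x, (f x : ℝ) ∂m := by
      intro m _ hm
      rw [Phi]
      have h2 := integral_subtype_comap (μ := m) hKmeas (fun x => (f x : ℝ))
      refine h2.trans ?_
      rw [Measure.restrict_eq_self_of_ae_mem (ae_memK m hm)]
    rw [← h1 μ hμ, ← h1 ν hν]
    exact Phi_eq μ ν hμ hν hmom F
  have h2 : ∀ (m : Measure ℝ) [IsProbabilityMeasure m],
      ∫⁻ x, (f x : ℝ≥0∞) ∂m = ENNReal.ofReal (∫ x, (f x : ℝ) ∂m) := by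
    intro m _
    rw [← BoundedContinuousFunction.toReal_lintegral_coe_eq_integral f m,
      ENNReal.ofReal_toReal (BoundedContinuousFunction.lintegral_lt_top_of_nnreal m f).ne]
  rw [h2 μ, h2 ν, key]


lemma arcsineK : arcsineLaw Ksetᶜ = 0 := by
  rw [arcsineLaw, withDensity_apply _ hKmeas.compl, Measure.restrict_restrict hKmeas.compl]
  have hempty : Ksetᶜ ∩ Ioo (-Real.sqrt 2) (Real.sqrt 2) = ∅ := by
    rw [Set.eq_empty_iff_forall_notMem]
    rintro x ⟨hx1, hx2⟩
    exact hx1 (Ioo_subset_Icc_self hx2)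
  rw [hempty]
  simp

/-- The moment problem for the normalized arcsine law is determinate: any
probability measure on `ℝ` whose even moments are `(1/2^m)·(2m choose m)` and
whose odd moments vanish equals the normalized arcsine law. -/
theorem arcsine_moment_problem_determinate (μ : Measure ℝ) [IsProbabilityMeasure μ]
    (heven : ∀ m : ℕ, ∫ x, x ^ (2 * m) ∂μ = (Nat.choose (2 * m) m : ℝ) / 2 ^ m)
    (hodd : ∀ m : ℕ, ∫ x, x ^ (2 * m + 1) ∂μ = 0) :
    μ = arcsineLaw := by
  apply measures_eq μ arcsineLaw (tail_zero μ heven) arcsineK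
  intro n
  rcases Nat.even_or_odd n with ⟨m, hm⟩ | ⟨m, hm⟩
  · have hn : n = 2 * m := by omega
    subst hn
    rw [heven m, arcsine_moment, sin_even_int m]
    have h4 : (4:ℝ) ^ m = 2 ^ m * 2 ^ m := by rw [← mul_pow]; norm_num
    rw [pow_mul, Real.sq_sqrt (by norm_num : (0:ℝ) ≤ 2), h4]
    have hπ := Real.pi_pos
    have h2 : (2:ℝ) ^ m ≠ 0 := by positivity
    field_simp
  · have hn : n = 2 * m + 1 := by omega
    subst hn
    rw [hodd m, arcsine_moment, sin_odd_int m]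
    simp
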